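/- Let 0 ≤ α₁ < 1, 0 ≤ α₂ < 1 and β₁ > 1, β₂ > 1. Then there exists a constant C = C(α₁,α₂,β₁,β₂) > 0 such that for every t > 0 one has ∫₀ᵗ ((t−τ)^{α₁} + (t−τ)^{β₁})^{−1} · (τ^{α₂} + τ^{β₂})^{−1} dτ ≤ C · (t^{max{α₁,α₂}} + t^{min{β₁,β₂}})^{−1}. -/

import Mathlib

open MeasureTheory

private lemma aux_meas (a b : ℝ) : Measurable (fun τ : ℝ => (τ ^ a + τ ^ b)⁻¹) := by
  fun_prop

private lemma aux_pos {a b s : ℝ} (hs : 0 < s) : 0 < s ^ a + s ^ b := by positivity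

private lemma aux_integrable {a b : ℝ} (ha : 0 ≤ a) (ha' : a < 1) (hb : 1 < b) :
    IntegrableOn (fun τ : ℝ => (τ ^ a + τ ^ b)⁻¹) (Set.Ioi 0) := by
  have hmeas := aux_meas a b
  have h1 : IntegrableOn (fun τ : ℝ => (τ ^ a + τ ^ b)⁻¹) (Set.Ioc 0 1) := by
    have hg : IntegrableOn (fun τ : ℝ => τ ^ (-a)) (Set.Ioc (0:ℝ) 1) := by
      rw [← intervalIntegrable_iff_integrableOn_Ioc_of_le zero_le_one]
      exact intervalIntegral.intervalIntegrable_rpow' (by linarith)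
    refine hg.mono' hmeas.aestronglyMeasurable.restrict ?_
    filter_upwards [ae_restrict_mem measurableSet_Ioc] with τ hτ
    rw [Real.norm_eq_abs, abs_of_nonneg (inv_nonneg.mpr (aux_pos hτ.1).le),
      Real.rpow_neg hτ.1.le]
    exact inv_anti₀ (Real.rpow_pos_of_pos hτ.1 a)
      (le_add_of_nonneg_right (Real.rpow_pos_of_pos hτ.1 b).le)
  have h2 : IntegrableOn (fun τ : ℝ => (τ ^ a + τ ^ b)⁻¹) (Set.Ioi 1) := by
    have hg : IntegrableOn (fun τ : ℝ => τ ^ (-b)) (Set.Ioi (1:ℝ)) :=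
      integrableOn_Ioi_rpow_of_lt (by linarith) one_pos
    refine hg.mono' hmeas.aestronglyMeasurable.restrict ?_
    filter_upwards [ae_restrict_mem measurableSet_Ioi] with τ hτ
    have hτ0 : (0:ℝ) < τ := lt_trans one_pos hτ
    rw [Real.norm_eq_abs, abs_of_nonneg (inv_nonneg.mpr (aux_pos hτ0).le),
      Real.rpow_neg hτ0.le]
    exact inv_anti₀ (Real.rpow_pos_of_pos hτ0 b)
      (le_add_of_nonneg_left (Real.rpow_pos_of_pos hτ0 a).le)
  rw [show Set.Ioi (0:ℝ) = Set.Ioc 0 1 ∪ Set.Ioi 1 from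
    (Set.Ioc_union_Ioi_eq_Ioi zero_le_one).symm]
  exact h1.union h2

private lemma aux_compare {a b m M t : ℝ} (h5 : 0 ≤ a) (h1 : a ≤ m) (h2 : m ≤ 1)
    (h3 : 1 ≤ M) (h4 : M ≤ b) (ht : 0 < t) :
    t ^ m + t ^ M ≤ 2 * 2 ^ b * ((t / 2) ^ a + (t / 2) ^ b) := by
  have ht2 : 0 < t / 2 := by linarith
  have e : ∀ c : ℝ, t ^ c = 2 ^ c * (t / 2) ^ c := fun c => by
    rw [← Real.mul_rpow (by norm_num) ht2.le]; congr 1; ring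
  have hab : a ≤ b := by linarith
  have hxa : (0:ℝ) ≤ (t / 2) ^ a := (Real.rpow_pos_of_pos ht2 a).le
  have hxb : (0:ℝ) ≤ (t / 2) ^ b := (Real.rpow_pos_of_pos ht2 b).le
  rcases le_or_gt t 1 with h | h
  · have hm : t ^ m ≤ t ^ a := Real.rpow_le_rpow_of_exponent_ge ht h h1
    have hM : t ^ M ≤ t ^ a := Real.rpow_le_rpow_of_exponent_ge ht h (by linarith)
    have h2a : (2:ℝ) ^ a ≤ 2 ^ b := Real.rpow_le_rpow_of_exponent_le one_le_two hab
    have h2b : (0:ℝ) < 2 ^ b := Real.rpow_pos_of_pos two_pos b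
    have := e a
    nlinarith [mul_le_mul_of_nonneg_right h2a hxa, mul_nonneg h2b.le hxb]
  · have hm : t ^ m ≤ t ^ b := Real.rpow_le_rpow_of_exponent_le h.le (by linarith)
    have hM : t ^ M ≤ t ^ b := Real.rpow_le_rpow_of_exponent_le h.le h4
    have h2b : (0:ℝ) < 2 ^ b := Real.rpow_pos_of_pos two_pos b
    have := e b
    nlinarith [mul_nonneg h2b.le hxa]


/-- **Technical integral estimate.**
Let `0 ≤ α₁ < 1`, `0 ≤ α₂ < 1` and `β₁ > 1`, `β₂ > 1`. Then there is a constant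
`C = C(α₁, α₂, β₁, β₂) > 0` such that for every `t > 0`,
`∫₀ᵗ ((t−τ)^{α₁} + (t−τ)^{β₁})⁻¹ (τ^{α₂} + τ^{β₂})⁻¹ dτ
  ≤ C · (t^{max(α₁,α₂)} + t^{min(β₁,β₂)})⁻¹`. -/
theorem integral_convolution_decay_bound (α₁ α₂ β₁ β₂ : ℝ)
    (hα₁ : 0 ≤ α₁) (hα₁' : α₁ < 1) (hα₂ : 0 ≤ α₂) (hα₂' : α₂ < 1)
    (hβ₁ : 1 < β₁) (hβ₂ : 1 < β₂) :
    ∃ C : ℝ, 0 < C ∧ ∀ t : ℝ, 0 < t →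
      ∫ τ in Set.Ioo (0 : ℝ) t,
          ((t - τ) ^ α₁ + (t - τ) ^ β₁)⁻¹ * (τ ^ α₂ + τ ^ β₂)⁻¹ ≤
        C * (t ^ max α₁ α₂ + t ^ min β₁ β₂)⁻¹ := by
  have hK : ∀ a b : ℝ, 0 ≤ a → a < 1 → 1 < b →
      (∫⁻ τ in Set.Ioi (0:ℝ), ENNReal.ofReal ((τ ^ a + τ ^ b)⁻¹)) < ⊤ := fun a b ha ha' hb =>
    lt_of_le_of_lt (lintegral_ofReal_le_lintegral_enorm _) (aux_integrable ha ha' hb).2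
  set K₁ : ENNReal := ∫⁻ τ in Set.Ioi (0:ℝ), ENNReal.ofReal ((τ ^ α₁ + τ ^ β₁)⁻¹) with hK₁def
  set K₂ : ENNReal := ∫⁻ τ in Set.Ioi (0:ℝ), ENNReal.ofReal ((τ ^ α₂ + τ ^ β₂)⁻¹) with hK₂def
  have hK₁ : K₁ < ⊤ := hK _ _ hα₁ hα₁' hβ₁
  have hK₂ : K₂ < ⊤ := hK _ _ hα₂ hα₂' hβ₂
  have hK₁r : 0 ≤ K₁.toReal := ENNReal.toReal_nonneg
  have hK₂r : 0 ≤ K₂.toReal := ENNReal.toReal_nonneg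
  set c₁ : ℝ := 2 * 2 ^ β₁ with hc₁def
  set c₂ : ℝ := 2 * 2 ^ β₂ with hc₂def
  have hc₁pos : 0 < c₁ := by rw [hc₁def]; positivity
  have hc₂pos : 0 < c₂ := by rw [hc₂def]; positivity
  refine ⟨c₁ * K₂.toReal + c₂ * K₁.toReal + 1, by positivity, fun t ht => ?_⟩
  have ht2 : 0 < t / 2 := by linarith
  set D : ℝ := t ^ max α₁ α₂ + t ^ min β₁ β₂ with hDdef
  have hDpos : 0 < D := by rw [hDdef]; positivity
  have hm1 : Measurable fun τ : ℝ => ((t - τ) ^ α₁ + (t - τ) ^ β₁)⁻¹ :=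
    (aux_meas α₁ β₁).comp (measurable_const.sub measurable_id)
  have hm2 := aux_meas α₂ β₂
  have hmeas : Measurable fun τ : ℝ =>
      ((t - τ) ^ α₁ + (t - τ) ^ β₁)⁻¹ * (τ ^ α₂ + τ ^ β₂)⁻¹ := hm1.mul hm2
  have hnn : 0 ≤ᵐ[volume.restrict (Set.Ioo 0 t)]
      fun τ => ((t - τ) ^ α₁ + (t - τ) ^ β₁)⁻¹ * (τ ^ α₂ + τ ^ β₂)⁻¹ := by
    filter_upwards [ae_restrict_mem measurableSet_Ioo] with τ hτ
    have h1 : 0 < t - τ := by linarith [hτ.2]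
    exact mul_nonneg (inv_nonneg.mpr (aux_pos h1).le) (inv_nonneg.mpr (aux_pos hτ.1).le)
  rw [integral_eq_lintegral_of_nonneg_ae hnn hmeas.aestronglyMeasurable.restrict]
  refine ENNReal.toReal_le_of_le_ofReal
    (mul_nonneg (by positivity) (inv_nonneg.mpr hDpos.le)) ?_
  have hf₁half : 0 ≤ ((t/2) ^ α₁ + (t/2) ^ β₁)⁻¹ := inv_nonneg.mpr (aux_pos ht2).le
  have hf₂half : 0 ≤ ((t/2) ^ α₂ + (t/2) ^ β₂)⁻¹ := inv_nonneg.mpr (aux_pos ht2).le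
  have hsplit : Set.Ioo (0:ℝ) t = Set.Ioc 0 (t/2) ∪ Set.Ioo (t/2) t :=
    (Set.Ioc_union_Ioo_eq_Ioo (by linarith) (by linarith)).symm
  rw [hsplit, lintegral_union measurableSet_Ioo
    (Set.Ioc_disjoint_Ioi_same.mono_right Set.Ioo_subset_Ioi_self)]
  have hp1 : (∫⁻ τ in Set.Ioc 0 (t/2),
        ENNReal.ofReal (((t - τ) ^ α₁ + (t - τ) ^ β₁)⁻¹ * (τ ^ α₂ + τ ^ β₂)⁻¹))
      ≤ ENNReal.ofReal (((t/2) ^ α₁ + (t/2) ^ β₁)⁻¹) * K₂ := by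
    have hb : ∀ τ ∈ Set.Ioc (0:ℝ) (t/2),
        ENNReal.ofReal (((t - τ) ^ α₁ + (t - τ) ^ β₁)⁻¹ * (τ ^ α₂ + τ ^ β₂)⁻¹)
          ≤ ENNReal.ofReal (((t/2) ^ α₁ + (t/2) ^ β₁)⁻¹) *
            ENNReal.ofReal ((τ ^ α₂ + τ ^ β₂)⁻¹) := by
      intro τ hτ
      have hts : t / 2 ≤ t - τ := by linarith [hτ.2]
      have hfle : ((t - τ) ^ α₁ + (t - τ) ^ β₁)⁻¹ ≤ ((t/2) ^ α₁ + (t/2) ^ β₁)⁻¹ :=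
        inv_anti₀ (aux_pos ht2) (add_le_add (Real.rpow_le_rpow ht2.le hts hα₁)
          (Real.rpow_le_rpow ht2.le hts (by linarith)))
      rw [← ENNReal.ofReal_mul hf₁half]
      exact ENNReal.ofReal_le_ofReal
        (mul_le_mul_of_nonneg_right hfle (inv_nonneg.mpr (aux_pos hτ.1).le))
    calc (∫⁻ τ in Set.Ioc 0 (t/2),
          ENNReal.ofReal (((t - τ) ^ α₁ + (t - τ) ^ β₁)⁻¹ * (τ ^ α₂ + τ ^ β₂)⁻¹))
        ≤ ∫⁻ τ in Set.Ioc 0 (t/2), ENNReal.ofReal (((t/2) ^ α₁ + (t/2) ^ β₁)⁻¹) *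
            ENNReal.ofReal ((τ ^ α₂ + τ ^ β₂)⁻¹) :=
          setLIntegral_mono (measurable_const.mul (ENNReal.measurable_ofReal.comp hm2)) hb
      _ = ENNReal.ofReal (((t/2) ^ α₁ + (t/2) ^ β₁)⁻¹) *
            ∫⁻ τ in Set.Ioc 0 (t/2), ENNReal.ofReal ((τ ^ α₂ + τ ^ β₂)⁻¹) :=
          lintegral_const_mul _ (ENNReal.measurable_ofReal.comp hm2)
      _ ≤ ENNReal.ofReal (((t/2) ^ α₁ + (t/2) ^ β₁)⁻¹) * K₂ :=
          mul_le_mul_right (lintegral_mono_set Set.Ioc_subset_Ioi_self) _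
  have hp2 : (∫⁻ τ in Set.Ioo (t/2) t,
        ENNReal.ofReal (((t - τ) ^ α₁ + (t - τ) ^ β₁)⁻¹ * (τ ^ α₂ + τ ^ β₂)⁻¹))
      ≤ ENNReal.ofReal (((t/2) ^ α₂ + (t/2) ^ β₂)⁻¹) * K₁ := by
    have hb : ∀ τ ∈ Set.Ioo (t/2) t,
        ENNReal.ofReal (((t - τ) ^ α₁ + (t - τ) ^ β₁)⁻¹ * (τ ^ α₂ + τ ^ β₂)⁻¹)
          ≤ ENNReal.ofReal (((t/2) ^ α₂ + (t/2) ^ β₂)⁻¹) *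
            ENNReal.ofReal (((t - τ) ^ α₁ + (t - τ) ^ β₁)⁻¹) := by
      intro τ hτ
      have h0τ : 0 < t - τ := by linarith [hτ.2]
      have hfle : (τ ^ α₂ + τ ^ β₂)⁻¹ ≤ ((t/2) ^ α₂ + (t/2) ^ β₂)⁻¹ :=
        inv_anti₀ (aux_pos ht2) (add_le_add (Real.rpow_le_rpow ht2.le hτ.1.le hα₂)
          (Real.rpow_le_rpow ht2.le hτ.1.le (by linarith)))
      rw [← ENNReal.ofReal_mul hf₂half]
      refine ENNReal.ofReal_le_ofReal ?_
      have h1 : 0 ≤ ((t - τ) ^ α₁ + (t - τ) ^ β₁)⁻¹ := inv_nonneg.mpr (aux_pos h0τ).le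
      nlinarith [mul_le_mul_of_nonneg_left hfle h1]
    calc (∫⁻ τ in Set.Ioo (t/2) t,
          ENNReal.ofReal (((t - τ) ^ α₁ + (t - τ) ^ β₁)⁻¹ * (τ ^ α₂ + τ ^ β₂)⁻¹))
        ≤ ∫⁻ τ in Set.Ioo (t/2) t, ENNReal.ofReal (((t/2) ^ α₂ + (t/2) ^ β₂)⁻¹) *
            ENNReal.ofReal (((t - τ) ^ α₁ + (t - τ) ^ β₁)⁻¹) :=
          setLIntegral_mono (measurable_const.mul (ENNReal.measurable_ofReal.comp hm1)) hb
      _ = ENNReal.ofReal (((t/2) ^ α₂ + (t/2) ^ β₂)⁻¹) *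
            ∫⁻ τ in Set.Ioo (t/2) t, ENNReal.ofReal (((t - τ) ^ α₁ + (t - τ) ^ β₁)⁻¹) :=
          lintegral_const_mul _ (ENNReal.measurable_ofReal.comp hm1)
      _ ≤ ENNReal.ofReal (((t/2) ^ α₂ + (t/2) ^ β₂)⁻¹) * K₁ := by
          refine mul_le_mul_right ?_ _
          have hemb : MeasurableEmbedding (fun τ : ℝ => t - τ) :=
            (continuous_const.sub continuous_id).measurableEmbedding
              (fun a b h => by simpa using h)
          have hpre : (fun τ : ℝ => t - τ) ⁻¹' Set.Ioo 0 (t/2) = Set.Ioo (t/2) t := by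
            ext x
            simp only [Set.mem_preimage, Set.mem_Ioo]
            constructor <;> rintro ⟨h1, h2⟩ <;> constructor <;> linarith
          have hcv := (Measure.measurePreserving_sub_left volume t).setLIntegral_comp_preimage_emb
            hemb (fun s => ENNReal.ofReal ((s ^ α₁ + s ^ β₁)⁻¹)) (Set.Ioo 0 (t/2))
          rw [hpre] at hcv
          rw [hcv]
          exact lintegral_mono_set Set.Ioo_subset_Ioi_self
  calc _ ≤ ENNReal.ofReal (((t/2) ^ α₁ + (t/2) ^ β₁)⁻¹) * K₂ +
        ENNReal.ofReal (((t/2) ^ α₂ + (t/2) ^ β₂)⁻¹) * K₁ := add_le_add hp1 hp2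
    _ ≤ ENNReal.ofReal ((c₁ * K₂.toReal + c₂ * K₁.toReal + 1) * D⁻¹) := by
      rw [← ENNReal.ofReal_toReal hK₁.ne, ← ENNReal.ofReal_toReal hK₂.ne,
        ← ENNReal.ofReal_mul hf₁half, ← ENNReal.ofReal_mul hf₂half,
        ← ENNReal.ofReal_add (mul_nonneg hf₁half hK₂r) (mul_nonneg hf₂half hK₁r)]
      refine ENNReal.ofReal_le_ofReal ?_
      rw [ENNReal.toReal_ofReal hK₂r, ENNReal.toReal_ofReal hK₁r]
      have hS₁ : 0 < (t/2) ^ α₁ + (t/2) ^ β₁ := aux_pos ht2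
      have hS₂ : 0 < (t/2) ^ α₂ + (t/2) ^ β₂ := aux_pos ht2
      have hc₁b : ((t/2) ^ α₁ + (t/2) ^ β₁)⁻¹ ≤ c₁ * D⁻¹ := by
        have hcmp := aux_compare hα₁ (le_max_left α₁ α₂) (max_le hα₁'.le hα₂'.le)
          (le_min hβ₁.le hβ₂.le) (min_le_left β₁ β₂) ht
        have h := (div_le_div_iff₀ hS₁ hDpos).mpr
          (by rw [hDdef, hc₁def]; linarith : 1 * D ≤ c₁ * ((t/2) ^ α₁ + (t/2) ^ β₁))
        simpa [one_div, div_eq_mul_inv] using h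
      have hc₂b : ((t/2) ^ α₂ + (t/2) ^ β₂)⁻¹ ≤ c₂ * D⁻¹ := by
        have hcmp := aux_compare hα₂ (le_max_right α₁ α₂) (max_le hα₁'.le hα₂'.le)
          (le_min hβ₁.le hβ₂.le) (min_le_right β₁ β₂) ht
        have h := (div_le_div_iff₀ hS₂ hDpos).mpr
          (by rw [hDdef, hc₂def]; linarith : 1 * D ≤ c₂ * ((t/2) ^ α₂ + (t/2) ^ β₂))
        simpa [one_div, div_eq_mul_inv] using h
      have hDinv : 0 ≤ D⁻¹ := inv_nonneg.mpr hDpos.le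
      nlinarith [mul_le_mul_of_nonneg_right hc₁b hK₂r,
        mul_le_mul_of_nonneg_right hc₂b hK₁r]
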